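/- Let θ be a bijective substitution of length ℓ that is simplified. Then the structure group G_θ is generated by the R-set I_θ, and I_θ = { θ_i θ_{i-1}^{-1} : i = 1, …, ℓ−1 }. -/
import Mathlib


variable {A : Type*}

/-- The bijections `(θⁿ)_i` in the expansion of the `n`-th power of the bijective
substitution `θ` of length `ℓ`:  `θⁿ(a) = (θⁿ)₀(a) ⋯ (θⁿ)_{ℓⁿ−1}(a)`. -/
def expandPerm (θ : ℕ → Equiv.Perm A) (ℓ : ℕ) : ℕ → ℕ → Equiv.Perm A
  | 0, _ => 1
  | n + 1, k => θ (k % ℓ) * expandPerm θ ℓ n (k / ℓ)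

/-- The substitution shift `X_θ`: the set of bi-infinite sequences all of whose finite
subwords occur in some `θᵏ(a)`. -/
def XSet (θ : ℕ → Equiv.Perm A) (ℓ : ℕ) : Set (ℤ → A) :=
  { x | ∀ (i : ℤ) (m : ℕ), ∃ (k : ℕ) (a : A) (j : ℕ), j + m ≤ ℓ ^ k ∧
      ∀ t : ℕ, t < m → x (i + (t : ℤ)) = expandPerm θ ℓ k (j + t) a }

/-- `θ` is primitive: some power `θᵏ(a)` contains every letter, for every `a`. -/
def IsPrimitive (θ : ℕ → Equiv.Perm A) (ℓ : ℕ) : Prop :=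
  ∃ k : ℕ, 0 < k ∧ ∀ a b : A, ∃ i : ℕ, i < ℓ ^ k ∧ expandPerm θ ℓ k i a = b

/-- `θ` is simplified: `θ₀ = θ_{ℓ-1} = id` and each word `θ(a)` contains all letters. -/
def IsSimplified (θ : ℕ → Equiv.Perm A) (ℓ : ℕ) : Prop :=
  θ 0 = 1 ∧ θ (ℓ - 1) = 1 ∧ ∀ a b : A, ∃ i : ℕ, i < ℓ ∧ θ i a = b

/-- The left shift `σⁿ` on bi-infinite sequences. -/
def shiftSeq (n : ℤ) (x : ℤ → A) : ℤ → A := fun j => x (j + n)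

/-- The substitution `θ` applied to a bi-infinite sequence (with the block of `x₀`
starting at index `0`). -/
def substSeq (θ : ℕ → Equiv.Perm A) (ℓ : ℕ) (x : ℤ → A) : ℤ → A :=
  fun m => θ ((m.emod (ℓ : ℤ)).toNat) (x (m.ediv (ℓ : ℤ)))

theorem shiftSeq_mem {θ : ℕ → Equiv.Perm A} {ℓ : ℕ} {x : ℤ → A} (n : ℤ)
    (hx : x ∈ XSet θ ℓ) : shiftSeq n x ∈ XSet θ ℓ := by
  intro i m
  obtain ⟨k, a, j, h1, h2⟩ := hx (i + n) m
  refine ⟨k, a, j, h1, fun t ht => ?_⟩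
  have h3 := h2 t ht
  show x (i + (t : ℤ) + n) = _
  rw [show i + (t : ℤ) + n = i + n + (t : ℤ) by ring]
  exact h3

/-- The shift, as a self-map of the substitution shift `X_θ`. -/
def shiftX (θ : ℕ → Equiv.Perm A) (ℓ : ℕ) (n : ℤ) (x : ↥(XSet θ ℓ)) : ↥(XSet θ ℓ) :=
  ⟨shiftSeq n x.1, shiftSeq_mem n x.2⟩

/-- The Ellis semigroup `E(X_θ)`: the closure of `{σⁿ : n ∈ ℤ}` in the space of self-maps
of `X_θ` with the topology of pointwise convergence. -/
def EllisZ [TopologicalSpace A] (θ : ℕ → Equiv.Perm A) (ℓ : ℕ) :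
    Set (↥(XSet θ ℓ) → ↥(XSet θ ℓ)) :=
  closure (Set.range fun n : ℤ => shiftX θ ℓ n)

/-- The generators `(θⁿ)_i` of the structure group. -/
def GensSet (θ : ℕ → Equiv.Perm A) (ℓ : ℕ) : Set (Equiv.Perm A) :=
  { g | ∃ (n i : ℕ), i < ℓ ^ n ∧ g = expandPerm θ ℓ n i }

/-- The structure group `G_θ`: the subgroup of the permutation group of the alphabet
generated by all `(θⁿ)_i`. -/
def Gtheta (θ : ℕ → Equiv.Perm A) (ℓ : ℕ) : Subgroup (Equiv.Perm A) :=
  Subgroup.closure (GensSet θ ℓ)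

/-- The R-set `I_θ = { (θⁿ)_i (θⁿ)_{i-1}⁻¹ : n ∈ ℕ, 1 ≤ i ≤ ℓⁿ - 1 }`. -/
def RSet (θ : ℕ → Equiv.Perm A) (ℓ : ℕ) : Set (Equiv.Perm A) :=
  { g | ∃ (n i : ℕ), 1 ≤ i ∧ i < ℓ ^ n ∧
      g = expandPerm θ ℓ n i * (expandPerm θ ℓ n (i - 1))⁻¹ }


lemma expandPerm_zero_idx {θ : ℕ → Equiv.Perm A} {ℓ : ℕ} (h0 : θ 0 = 1) (n : ℕ) :
    expandPerm θ ℓ n 0 = 1 := by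
  induction n with
  | zero => rfl
  | succ n ih => simp [expandPerm, h0, ih]

lemma key_lemma {θ : ℕ → Equiv.Perm A} {ℓ : ℕ} (hl : 0 < ℓ)
    (h0 : θ 0 = 1) (hlast : θ (ℓ - 1) = 1) :
    ∀ n i, 1 ≤ i → i < ℓ ^ n →
    ∃ j, 1 ≤ j ∧ j < ℓ ∧
      expandPerm θ ℓ n i * (expandPerm θ ℓ n (i - 1))⁻¹ = θ j * (θ (j - 1))⁻¹ := by
  intro n
  induction n with
  | zero => intro i h1 h2; simp at h2; omega
  | succ n ih =>
    intro i h1 h2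
    obtain ⟨q, r, hrl, rfl⟩ : ∃ q r, r < ℓ ∧ i = ℓ * q + r :=
      ⟨i / ℓ, i % ℓ, Nat.mod_lt _ hl, (Nat.div_add_mod i ℓ).symm⟩
    have hp : ℓ ^ (n + 1) = ℓ * ℓ ^ n := by ring
    have himod : (ℓ * q + r) % ℓ = r := by rw [Nat.mul_add_mod, Nat.mod_eq_of_lt hrl]
    have hidiv : (ℓ * q + r) / ℓ = q := by
      rw [Nat.mul_add_div hl, Nat.div_eq_of_lt hrl]; omega
    by_cases hr0 : r = 0
    · subst hr0
      have hq1 : 1 ≤ q := by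
        by_contra h
        have hq0 : q = 0 := by omega
        subst hq0
        simp at h1
      obtain ⟨q', rfl⟩ : ∃ q', q = q' + 1 := ⟨q - 1, by omega⟩
      have hdist : ℓ * (q' + 1) = ℓ * q' + ℓ := by ring
      have hqlt : q' + 1 < ℓ ^ n := by
        refine Nat.lt_of_mul_lt_mul_left (a := ℓ) ?_
        omega
      have him1 : (ℓ * (q' + 1) + 0) - 1 = ℓ * q' + (ℓ - 1) := by omega
      have hmod' : ((ℓ * (q' + 1) + 0) - 1) % ℓ = ℓ - 1 := by
        rw [him1, Nat.mul_add_mod, Nat.mod_eq_of_lt (by omega)]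
      have hdiv' : ((ℓ * (q' + 1) + 0) - 1) / ℓ = q' := by
        rw [him1, Nat.mul_add_div hl, Nat.div_eq_of_lt (by omega)]; omega
      obtain ⟨j, hj1, hj2, hj3⟩ := ih (q' + 1) (by omega) hqlt
      refine ⟨j, hj1, hj2, ?_⟩
      rw [show expandPerm θ ℓ (n+1) (ℓ * (q' + 1) + 0) =
            θ ((ℓ * (q' + 1) + 0) % ℓ) *
              expandPerm θ ℓ n ((ℓ * (q' + 1) + 0) / ℓ) from rfl,
        show expandPerm θ ℓ (n+1) ((ℓ * (q' + 1) + 0) - 1) =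
            θ (((ℓ * (q' + 1) + 0) - 1) % ℓ) *
              expandPerm θ ℓ n (((ℓ * (q' + 1) + 0) - 1) / ℓ) from rfl,
        himod, hidiv, hmod', hdiv', h0, hlast, one_mul, one_mul]
      exact hj3
    · have him1 : (ℓ * q + r) - 1 = ℓ * q + (r - 1) := by omega
      have hmod' : ((ℓ * q + r) - 1) % ℓ = r - 1 := by
        rw [him1, Nat.mul_add_mod, Nat.mod_eq_of_lt (by omega)]
      have hdiv' : ((ℓ * q + r) - 1) / ℓ = q := by
        rw [him1, Nat.mul_add_div hl, Nat.div_eq_of_lt (by omega)]; omega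
      refine ⟨r, by omega, hrl, ?_⟩
      rw [show expandPerm θ ℓ (n+1) (ℓ * q + r) =
            θ ((ℓ * q + r) % ℓ) * expandPerm θ ℓ n ((ℓ * q + r) / ℓ) from rfl,
        show expandPerm θ ℓ (n+1) ((ℓ * q + r) - 1) =
            θ (((ℓ * q + r) - 1) % ℓ) *
              expandPerm θ ℓ n (((ℓ * q + r) - 1) / ℓ) from rfl,
        himod, hidiv, hmod', hdiv']
      group

lemma expand_mem_closure {θ : ℕ → Equiv.Perm A} {ℓ : ℕ} (h0 : θ 0 = 1) :
    ∀ n i, i < ℓ ^ n → expandPerm θ ℓ n i ∈ Subgroup.closure (RSet θ ℓ) := by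
  intro n i
  induction i with
  | zero => intro _; rw [expandPerm_zero_idx h0]; exact Subgroup.one_mem _
  | succ i ih =>
    intro hlt
    have h1 : expandPerm θ ℓ n (i + 1) =
        (expandPerm θ ℓ n (i + 1) * (expandPerm θ ℓ n i)⁻¹) * expandPerm θ ℓ n i := by
      group
    rw [h1]
    refine Subgroup.mul_mem _ (Subgroup.subset_closure ?_) (ih (by omega))
    exact ⟨n, i + 1, by omega, hlt, by simp⟩

/-- For a simplified bijective substitution `θ` of length `ℓ`, the structure group `G_θ` is
generated by the R-set `I_θ`, and `I_θ = { θ_i θ_{i-1}⁻¹ : i = 1, …, ℓ−1 }`. -/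
theorem stmt_12 [Fintype A] (θ : ℕ → Equiv.Perm A) (ℓ : ℕ) (hl : 0 < ℓ)
    (hsimp : IsSimplified θ ℓ) :
    Subgroup.closure (RSet θ ℓ) = Gtheta θ ℓ ∧
    RSet θ ℓ = { g : Equiv.Perm A | ∃ i : ℕ, 1 ≤ i ∧ i < ℓ ∧ g = θ i * (θ (i - 1))⁻¹ } := by
  obtain ⟨h0, hlast, _⟩ := hsimp
  constructor
  · apply le_antisymm
    · rw [Subgroup.closure_le]
      rintro g ⟨n, i, h1, h2, rfl⟩
      exact Subgroup.mul_mem _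
        (Subgroup.subset_closure ⟨n, i, h2, rfl⟩)
        (Subgroup.inv_mem _ (Subgroup.subset_closure ⟨n, i - 1, by omega, rfl⟩))
    · rw [Gtheta, Subgroup.closure_le]
      rintro g ⟨n, i, h1, rfl⟩
      exact expand_mem_closure h0 n i h1
  · ext g
    constructor
    · rintro ⟨n, i, h1, h2, rfl⟩
      obtain ⟨j, hj1, hj2, hj3⟩ := key_lemma hl h0 hlast n i h1 h2
      exact ⟨j, hj1, hj2, hj3⟩
    · rintro ⟨j, hj1, hj2, rfl⟩
      refine ⟨1, j, hj1, by simpa using hj2, ?_⟩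
      have e1 : expandPerm θ ℓ 1 j = θ j := by
        show θ (j % ℓ) * expandPerm θ ℓ 0 (j / ℓ) = θ j
        rw [Nat.mod_eq_of_lt hj2]; simp [expandPerm]
      have e2 : expandPerm θ ℓ 1 (j - 1) = θ (j - 1) := by
        show θ ((j-1) % ℓ) * expandPerm θ ℓ 0 ((j-1) / ℓ) = θ (j-1)
        rw [Nat.mod_eq_of_lt (by omega)]; simp [expandPerm]
      rw [e1, e2]
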